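/- For every n × n Latin square L, the sum over all pairs of rows r₁ < r₂ of the distance d(r₁, r₂) equals n²(n²-1)/6. -/
import Mathlib


open Finset

structure LatinSquare (n : ℕ) where
  toFun : Fin n → Fin n → Fin n
  row_bij : ∀ r, Function.Bijective (toFun r)
  col_bij : ∀ c, Function.Bijective (fun r => toFun r c)

namespace LatinSquare

variable {n : ℕ}

/-- The column containing symbol `s` in row `r`. -/
noncomputable def pos (L : LatinSquare n) (r s : Fin n) : Fin n :=
  (Equiv.ofBijective _ (L.row_bij r)).symm s

/-- The distance between two rows. -/
noncomputable def dist (L : LatinSquare n) (r₁ r₂ : Fin n) : ℤ :=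
  ∑ s : Fin n, |((L.pos r₁ s : ℕ) : ℤ) - ((L.pos r₂ s : ℕ) : ℤ)|

/-- Three times the imbalance, `3·I(L)`. -/
noncomputable def imbalance3 (L : LatinSquare n) : ℤ :=
  ∑ p ∈ Finset.univ.filter (fun p : Fin n × Fin n => p.1 < p.2),
    |3 * L.dist p.1 p.2 - (n : ℤ) * ((n : ℤ) + 1)|

end LatinSquare

lemma sum_fin_two' (n : ℕ) : 2 * ∑ i : Fin n, ((i:ℕ):ℤ) = n * (n - 1) := by
  induction n with
  | zero => simp
  | succ n ih =>
    rw [Fin.sum_univ_castSucc]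
    push_cast
    push_cast at ih
    simp only [Fin.coe_castSucc]
    linarith

lemma T_lemma' (n : ℕ) :
    3 * ∑ p : Fin n × Fin n, |((p.1:ℕ):ℤ) - ((p.2:ℕ):ℤ)| = (n:ℤ)^3 - n := by
  induction n with
  | zero => simp
  | succ n ih =>
    rw [Fintype.sum_prod_type] at ih ⊢
    rw [Fin.sum_univ_castSucc]
    have hin : ∀ i : Fin (n+1), ∑ j : Fin (n+1), |((i:ℕ):ℤ) - ((j:ℕ):ℤ)|
        = (∑ j : Fin n, |((i:ℕ):ℤ) - ((j:ℕ):ℤ)|) + |((i:ℕ):ℤ) - (n:ℤ)| := by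
      intro i
      rw [Fin.sum_univ_castSucc]
      simp
    simp only [hin]
    rw [Finset.sum_add_distrib]
    have h1 : ∀ i : Fin n, |(((Fin.castSucc i : Fin (n+1)):ℕ):ℤ) - (n:ℤ)| = (n:ℤ) - i := by
      intro i
      have := i.isLt
      rw [Fin.coe_castSucc, abs_sub_comm, abs_of_nonneg (by push_cast; omega)]
    have h2 : ∀ j : Fin n, |(n:ℤ) - ((j:ℕ):ℤ)| = (n:ℤ) - j := by
      intro j
      have := j.isLt
      rw [abs_of_nonneg (by push_cast; omega)]
    simp only [h1, h2, Fin.val_last, sub_self, abs_zero, add_zero]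
    have hcs : ∀ i : Fin n, ∑ j : Fin n, |(((Fin.castSucc i : Fin (n+1)):ℕ):ℤ) - ((j:ℕ):ℤ)|
        = ∑ j : Fin n, |((i:ℕ):ℤ) - ((j:ℕ):ℤ)| := by
      intro i; simp
    simp only [hcs]
    simp only [Finset.sum_sub_distrib, Finset.sum_const, Finset.card_univ,
      Fintype.card_fin, nsmul_eq_mul]
    have hg := sum_fin_two' n
    push_cast at ih hg ⊢
    ring_nf
    ring_nf at ih hg
    linarith

theorem LatinSquare.sum_dist (n : ℕ) (L : LatinSquare n) :
    ∑ p ∈ Finset.univ.filter (fun p : Fin n × Fin n => p.1 < p.2),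
      L.dist p.1 p.2 = (n : ℤ) ^ 2 * ((n : ℤ) ^ 2 - 1) / 6 := by
  classical
  set S := ∑ p ∈ Finset.univ.filter (fun p : Fin n × Fin n => p.1 < p.2),
      L.dist p.1 p.2 with hS
  have hsym : ∀ r₁ r₂ : Fin n, L.dist r₁ r₂ = L.dist r₂ r₁ := by
    intro r₁ r₂
    unfold LatinSquare.dist
    exact Finset.sum_congr rfl fun s _ => abs_sub_comm _ _
  -- the univ sum equals 2 * S
  have hswap : ∑ p ∈ Finset.univ.filter (fun p : Fin n × Fin n => p.2 < p.1),
      L.dist p.1 p.2 = S := by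
    rw [hS]
    refine Finset.sum_equiv (Equiv.prodComm (Fin n) (Fin n)) ?_ ?_
    · intro p; simp [Equiv.prodComm]
    · intro p hp; exact hsym p.1 p.2
  have hdiag : ∑ p ∈ Finset.univ.filter (fun p : Fin n × Fin n => p.1 = p.2),
      L.dist p.1 p.2 = 0 := by
    refine Finset.sum_eq_zero ?_
    intro p hp
    simp only [Finset.mem_filter] at hp
    rw [hp.2]
    unfold LatinSquare.dist
    simp
  have hsplit : ∑ p : Fin n × Fin n, L.dist p.1 p.2 = 2 * S := by
    rw [← Finset.sum_filter_add_sum_filter_not Finset.univ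
      (fun p : Fin n × Fin n => p.1 < p.2) (fun p => L.dist p.1 p.2)]
    have hnot : Finset.univ.filter (fun p : Fin n × Fin n => ¬ p.1 < p.2)
        = Finset.univ.filter (fun p : Fin n × Fin n => p.2 < p.1)
          ∪ Finset.univ.filter (fun p : Fin n × Fin n => p.1 = p.2) := by
      ext p
      simp only [Finset.mem_filter, Finset.mem_union, Finset.mem_univ, true_and]
      constructor
      · intro h
        rcases lt_or_eq_of_le (not_lt.mp h) with h' | h'
        · exact Or.inl h'
        · exact Or.inr h'.symm
      · rintro (h | h)
        · exact not_lt.mpr h.le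
        · exact h ▸ lt_irrefl _
    rw [hnot, Finset.sum_union, hswap, hdiag]
    · ring
    · rw [Finset.disjoint_filter]
      intro p _ h h'
      rw [h'] at h
      exact lt_irrefl _ h
  -- per-symbol positions are a bijection on rows
  have hposinj : ∀ s : Fin n, Function.Bijective (fun r => L.pos r s) := by
    intro s
    refine Finite.injective_iff_bijective.mp ?_
    intro r₁ r₂ h
    have h1 : L.toFun r₁ (L.pos r₁ s) = s :=
      (Equiv.ofBijective _ (L.row_bij r₁)).apply_symm_apply s
    have h2 : L.toFun r₂ (L.pos r₂ s) = s :=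
      (Equiv.ofBijective _ (L.row_bij r₂)).apply_symm_apply s
    simp only at h
    rw [h] at h1
    exact (L.col_bij (L.pos r₂ s)).1 (h1.trans h2.symm)
  -- compute the univ sum
  have huniv : 3 * ∑ p : Fin n × Fin n, L.dist p.1 p.2 = (n:ℤ) * ((n:ℤ)^3 - n) := by
    unfold LatinSquare.dist
    rw [Finset.sum_comm' (s := Finset.univ) (t := fun _ => Finset.univ)
      (t' := Finset.univ) (s' := fun _ => Finset.univ) (by simp)]
    have hre : ∀ s : Fin n,
        ∑ p : Fin n × Fin n, |((L.pos p.1 s : ℕ):ℤ) - ((L.pos p.2 s : ℕ):ℤ)|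
        = ∑ p : Fin n × Fin n, |((p.1:ℕ):ℤ) - ((p.2:ℕ):ℤ)| := by
      intro s
      exact Fintype.sum_equiv
        (Equiv.prodCongr (Equiv.ofBijective _ (hposinj s)) (Equiv.ofBijective _ (hposinj s)))
        _ _ (fun p => rfl)
    calc 3 * ∑ s : Fin n, ∑ p : Fin n × Fin n,
          |((L.pos p.1 s : ℕ):ℤ) - ((L.pos p.2 s : ℕ):ℤ)|
        = 3 * ∑ s : Fin n, ∑ p : Fin n × Fin n, |((p.1:ℕ):ℤ) - ((p.2:ℕ):ℤ)| := by
          rw [Finset.sum_congr rfl fun s _ => hre s]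
      _ = (n:ℤ) * ((n:ℤ)^3 - n) := by
          rw [Finset.sum_const, Finset.card_univ, Fintype.card_fin, nsmul_eq_mul,
            ← mul_assoc, mul_comm (3:ℤ) (n:ℤ), mul_assoc, T_lemma' n]
  have h6 : (n:ℤ)^2 * ((n:ℤ)^2 - 1) = 6 * S := by
    rw [hsplit] at huniv
    ring_nf
    ring_nf at huniv
    linarith
  rw [h6, Int.mul_ediv_cancel_left S (by norm_num)]
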